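/- Let 0 < s ≤ k ≤ n be positive integers, L a set of s nonnegative integers, and ℱ an L-intersecting, k-uniform family of subsets of [n]. Then |ℱ| ≤ C(n, s). -/

import Mathlib

open Finset Submodule Module

variable {n : ℕ}

noncomputable def rcwMon (n : ℕ) (I : Finset (Fin n)) : Finset (Fin n) → ℝ :=
  fun A => if I ⊆ A then (1:ℝ) else 0

noncomputable def rcwMS (n d : ℕ) : Submodule ℝ (Finset (Fin n) → ℝ) :=
  Submodule.span ℝ (rcwMon n '' {I | I.card ≤ d})

noncomputable def rcwCard (n : ℕ) (F : Finset (Fin n)) : Finset (Fin n) → ℝ :=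
  fun A => ((A ∩ F).card : ℝ)

lemma rcwMS_mono {d e : ℕ} (h : d ≤ e) : rcwMS n d ≤ rcwMS n e :=
  Submodule.span_mono (Set.image_mono (fun I hI => le_trans hI h))

lemma rcwCard_mul_mon (F I : Finset (Fin n)) :
    rcwCard n F * rcwMon n I = ∑ i ∈ F, rcwMon n (insert i I) := by
  classical
  funext A
  simp only [Pi.mul_apply, rcwCard, rcwMon, Finset.sum_apply]
  by_cases hIA : I ⊆ A
  · simp only [hIA, if_true, mul_one]
    have : ∀ i ∈ F, (if insert i I ⊆ A then (1:ℝ) else 0) = if i ∈ A then 1 else 0 := by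
      intro i _
      simp [Finset.insert_subset_iff, hIA]
    rw [Finset.sum_congr rfl this, Finset.sum_boole]
    have hFA : F.filter (fun i => i ∈ A) = A ∩ F := by
      ext i; simp [Finset.mem_inter, and_comm]
    rw [hFA]
  · simp only [hIA, if_false, mul_zero]
    rw [eq_comm, Finset.sum_eq_zero]
    intro i _
    have : ¬ insert i I ⊆ A := fun h => hIA (Finset.Subset.trans (Finset.subset_insert i I) h)
    simp [this]

lemma rcwMulStep {d : ℕ} (F : Finset (Fin n)) {h : Finset (Fin n) → ℝ}
    (hh : h ∈ rcwMS n d) : rcwCard n F * h ∈ rcwMS n (d+1) := by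
  have hmap : (rcwMS n d).map (LinearMap.mulLeft ℝ (rcwCard n F)) ≤ rcwMS n (d+1) := by
    rw [rcwMS, Submodule.map_span_le]
    rintro m ⟨I, hI, rfl⟩
    have heq : LinearMap.mulLeft ℝ (rcwCard n F) (rcwMon n I)
        = ∑ i ∈ F, rcwMon n (insert i I) := by
      simpa [LinearMap.mulLeft_apply] using rcwCard_mul_mon F I
    rw [heq]
    exact Submodule.sum_mem _ (fun i _ => Submodule.subset_span
      ⟨insert i I, le_trans (Finset.card_insert_le i I) (Nat.succ_le_succ hI), rfl⟩)
  exact hmap ⟨h, hh, rfl⟩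

noncomputable def rcwP (n : ℕ) (F : Finset (Fin n)) (L : Finset ℕ) : Finset (Fin n) → ℝ :=
  fun A => ∏ l ∈ L, (((A ∩ F).card : ℝ) - l)

lemma rcwMon_mem {d : ℕ} {I : Finset (Fin n)} (hI : I.card ≤ d) : rcwMon n I ∈ rcwMS n d :=
  Submodule.subset_span ⟨I, hI, rfl⟩

lemma rcwP_mem (F : Finset (Fin n)) (L : Finset ℕ) : rcwP n F L ∈ rcwMS n L.card := by
  classical
  induction L using Finset.induction with
  | empty =>
      have h0 : rcwP n F ∅ = rcwMon n ∅ := by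
        funext A; simp [rcwP, rcwMon]
      rw [h0]; simpa using rcwMon_mem (le_refl 0)
  | @insert l L hl ih =>
      have heq : rcwP n F (insert l L) = rcwCard n F * rcwP n F L - (l:ℝ) • rcwP n F L := by
        funext A
        simp only [rcwP, Finset.prod_insert hl, Pi.sub_apply, Pi.mul_apply, Pi.smul_apply,
          rcwCard, smul_eq_mul]
        ring
      rw [heq, Finset.card_insert_of_notMem hl]
      exact Submodule.sub_mem _ (rcwMulStep F ih)
        (Submodule.smul_mem _ _ (rcwMS_mono (Nat.le_succ _) ih))

noncomputable def rcwG (n k : ℕ) (I : Finset (Fin n)) : Finset (Fin n) → ℝ :=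
  fun A => ((A.card : ℝ) - k) * (if I ⊆ A then 1 else 0)

lemma rcwG_mem (k : ℕ) (I : Finset (Fin n)) : rcwG n k I ∈ rcwMS n (I.card + 1) := by
  have heq : rcwG n k I = rcwCard n Finset.univ * rcwMon n I - (k:ℝ) • rcwMon n I := by
    funext A
    simp only [rcwG, rcwCard, rcwMon, Pi.sub_apply, Pi.mul_apply, Pi.smul_apply, smul_eq_mul,
      Finset.inter_univ]
    ring
  rw [heq]
  exact Submodule.sub_mem _ (rcwMulStep _ (rcwMon_mem le_rfl))
    (Submodule.smul_mem _ _ (rcwMS_mono (Nat.le_succ _) (rcwMon_mem le_rfl)))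

lemma rcwFilterCard (n d : ℕ) :
    ((Finset.univ : Finset (Finset (Fin n))).filter (fun I => I.card < d)).card
      = ∑ i ∈ Finset.range d, n.choose i := by
  classical
  have hbi : (Finset.univ.filter (fun I : Finset (Fin n) => I.card < d))
      = (Finset.range d).biUnion (fun i => Finset.powersetCard i Finset.univ) := by
    ext I
    simp [Finset.mem_biUnion, Finset.mem_powersetCard_univ]
  rw [hbi, Finset.card_biUnion]
  · refine Finset.sum_congr rfl (fun i _ => ?_)
    simp [Finset.card_powersetCard]
  · intro i _ j _ hij
    simp only [Finset.disjoint_left, Finset.mem_powersetCard_univ]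
    rintro I rfl h
    omega

lemma rcw_aux (n k s : ℕ) (hs : 0 < s) (hsk : s ≤ k) (hkn : k ≤ n)
    (L : Finset ℕ) (hLcard : L.card = s) (hLk : ∀ l ∈ L, l < k)
    (ℱ : Finset (Finset (Fin n)))
    (huniform : ∀ F ∈ ℱ, F.card = k)
    (hL : ∀ E ∈ ℱ, ∀ F ∈ ℱ, E ≠ F → (E ∩ F).card ∈ L) :
    ℱ.card ≤ n.choose s := by
  classical
  set v : (↥ℱ ⊕ {I : Finset (Fin n) // I.card < s}) → (Finset (Fin n) → ℝ) :=
      Sum.elim (fun F => rcwP n F.1 L) (fun I => rcwG n k I.1) with hv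
  have memv : ∀ i, v i ∈ rcwMS n s := by
    rintro (⟨F, hF⟩ | ⟨I, hI⟩)
    · simpa [hv, hLcard] using rcwP_mem F L
    · exact rcwMS_mono hI (rcwG_mem k I)
  have hind : LinearIndependent ℝ v := by
    rw [Fintype.linearIndependent_iff]
    intro c hc
    have hF0 : ∀ F : ↥ℱ, c (Sum.inl F) = 0 := by
      intro E
      have hev := congrFun hc (E : Finset (Fin n))
      simp only [Finset.sum_apply, Pi.smul_apply, smul_eq_mul, Pi.zero_apply,
        Fintype.sum_sum_type] at hev
      have hg0 : ∀ I : {I : Finset (Fin n) // I.card < s},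
          c (Sum.inr I) * v (Sum.inr I) (E : Finset (Fin n)) = 0 := by
        intro I
        simp [hv, rcwG, huniform E.1 E.2]
      rw [Finset.sum_congr rfl (fun I _ => hg0 I), Finset.sum_const_zero, add_zero] at hev
      rw [Finset.sum_eq_single E] at hev
      · have hEE : ((E : Finset (Fin n)) ∩ (E : Finset (Fin n))).card = k := by
          rw [Finset.inter_self]; exact huniform E.1 E.2
        have hne : rcwP n (E : Finset (Fin n)) L (E : Finset (Fin n)) ≠ 0 := by
          rw [rcwP]
          apply Finset.prod_ne_zero_iff.2
          intro l hl habs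
          rw [hEE, sub_eq_zero] at habs
          exact absurd (Nat.cast_inj.mp habs) (Nat.ne_of_gt (hLk l hl))
        rcases mul_eq_zero.mp hev with h | h
        · exact h
        · exact absurd h (by simpa [hv] using hne)
      · intro F _ hFE
        have hne' : (F : Finset (Fin n)) ≠ (E : Finset (Fin n)) := by
          intro habs; exact hFE (Subtype.ext habs)
        have hmem : ((E : Finset (Fin n)) ∩ (F : Finset (Fin n))).card ∈ L :=
          hL E.1 E.2 F.1 F.2 (Ne.symm hne')
        have hz : rcwP n (F : Finset (Fin n)) L (E : Finset (Fin n)) = 0 := by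
          rw [rcwP]
          exact Finset.prod_eq_zero hmem (by simp)
        simp [hv, hz]
      · intro h
        exact absurd (Finset.mem_univ E) h
    have hI0 : ∀ (A : Finset (Fin n)) (hA : A.card < s), c (Sum.inr ⟨A, hA⟩) = 0 := by
      intro A
      induction A using Finset.strongInduction with
      | _ A ih =>
        intro hA
        have hev := congrFun hc A
        simp only [Finset.sum_apply, Pi.smul_apply, smul_eq_mul, Pi.zero_apply,
          Fintype.sum_sum_type] at hev
        rw [Finset.sum_congr rfl (fun F _ => by rw [hF0 F, zero_mul]),
          Finset.sum_const_zero, zero_add] at hev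
        rw [Finset.sum_eq_single (⟨A, hA⟩ : {I : Finset (Fin n) // I.card < s})] at hev
        · have hcoef : v (Sum.inr ⟨A, hA⟩) A = ((A.card : ℝ) - k) := by
            simp [hv, rcwG]
          rw [hcoef] at hev
          rcases mul_eq_zero.mp hev with h | h
          · exact h
          · exfalso
            rw [sub_eq_zero] at h
            have : A.card = k := Nat.cast_inj.mp h
            omega
        · rintro ⟨J, hJ⟩ _ hne
          by_cases hsub : J ⊆ A
          · have hJA : J ⊂ A := by
              refine Finset.ssubset_iff_subset_ne.2 ⟨hsub, ?_⟩
              intro habs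
              exact hne (by simp [habs])
            rw [ih J hJA hJ, zero_mul]
          · simp [hv, rcwG, hsub]
        · intro h
          exact absurd (Finset.mem_univ _) h
    intro i
    match i with
    | Sum.inl F => exact hF0 F
    | Sum.inr ⟨I, hI⟩ => exact hI0 I hI
  -- dimension bound
  set T : Finset (Finset (Fin n) → ℝ) :=
    (Finset.univ.filter (fun I : Finset (Fin n) => I.card < s + 1)).image (rcwMon n) with hT
  have hspan : rcwMS n s = Submodule.span ℝ (T : Set (Finset (Fin n) → ℝ)) := by
    rw [rcwMS]
    congr 1
    ext f
    simp [hT, Nat.lt_succ_iff]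
  have hfin : Module.Finite ℝ (rcwMS n s) := by
    rw [hspan]; infer_instance
  have hcardle : Fintype.card (↥ℱ ⊕ {I : Finset (Fin n) // I.card < s})
      ≤ finrank ℝ (rcwMS n s) := by
    have hind' : LinearIndependent ℝ (fun i => (⟨v i, memv i⟩ : rcwMS n s)) := by
      apply LinearIndependent.of_comp (rcwMS n s).subtype
      convert hind
      rfl
    exact hind'.fintype_card_le_finrank
  have hrank : finrank ℝ (rcwMS n s) ≤ ∑ i ∈ Finset.range (s+1), n.choose i := by
    rw [hspan]
    calc finrank ℝ (Submodule.span ℝ (T : Set (Finset (Fin n) → ℝ))) ≤ T.card :=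
          finrank_span_finset_le_card T
      _ ≤ (Finset.univ.filter (fun I : Finset (Fin n) => I.card < s + 1)).card :=
          Finset.card_image_le
      _ = ∑ i ∈ Finset.range (s+1), n.choose i := rcwFilterCard n (s+1)
  have hcards : Fintype.card (↥ℱ ⊕ {I : Finset (Fin n) // I.card < s})
      = ℱ.card + ∑ i ∈ Finset.range s, n.choose i := by
    rw [Fintype.card_sum, Fintype.card_coe]
    congr 1
    rw [Fintype.card_subtype]
    exact rcwFilterCard n s
  rw [hcards] at hcardle
  rw [Finset.sum_range_succ] at hrank
  omega

theorem stmt_12 (n k s : ℕ) (hs : 0 < s) (hsk : s ≤ k) (hkn : k ≤ n)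
    (L : Finset ℕ) (hLcard : L.card = s)
    (ℱ : Finset (Finset (Fin n)))
    (huniform : ∀ F ∈ ℱ, F.card = k)
    (hL : ∀ E ∈ ℱ, ∀ F ∈ ℱ, E ≠ F → (E ∩ F).card ∈ L) :
    ℱ.card ≤ n.choose s := by
  classical
  obtain ⟨L', hsub, hsub', hcard'⟩ :=
    Finset.exists_subsuperset_card_eq (Finset.inter_subset_right (s₁ := L) (s₂ := Finset.range k))
      (le_trans (Finset.card_le_card Finset.inter_subset_left) (le_of_eq hLcard))
      (by simpa using hsk)
  refine rcw_aux n k s hs hsk hkn L' hcard' (fun l hl => by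
      have := hsub' hl; simpa using this) ℱ huniform ?_
  intro E hE F hF hEF
  have hmem : (E ∩ F).card ∈ L := hL E hE F hF hEF
  have hlt : (E ∩ F).card < k := by
    rcases lt_or_eq_of_le (le_trans (Finset.card_le_card (Finset.inter_subset_left (s₂ := F)))
      (le_of_eq (huniform E hE))) with h | h
    · exact h
    · exfalso
      have h1 : E ∩ F = E := Finset.eq_of_subset_of_card_le Finset.inter_subset_left
        (by rw [h, huniform E hE])
      have h2 : E ⊆ F := by rw [← h1]; exact Finset.inter_subset_right
      exact hEF (Finset.eq_of_subset_of_card_le h2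
        (by rw [huniform E hE, huniform F hF]))
  exact hsub (Finset.mem_inter.2 ⟨hmem, Finset.mem_range.2 hlt⟩)
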